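/- For any finite graph G, av(G) ≤ T_1(G) ≤ ev(G) + 2·ov(G), where av(G) is the number of distinct vertex degrees occurring in G, ev(G) is the number of distinct even vertex degrees occurring in G, and ov(G) is the number of distinct odd vertex degrees occurring in G. -/

import Mathlib

/-!
Basic framework for flexible-tile DNA self-assembly.

Bond-edge types are elements of `Fin m`.  A cohesive end is either unhatted
(`Sum.inl a`) or hatted (`Sum.inr a`).  A tile is a finite multiset of cohesive
ends, and a pot is a finite set of tiles.
-/

/-- A tile over the bond-edge alphabet `Fin m`. -/
abbrev Tile (m : ℕ) : Type := Multiset (Fin m ⊕ Fin m)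

/-- A pot: a finite set of tiles over the alphabet `Fin m`. -/
abbrev Pot (m : ℕ) : Type := Finset (Tile m)

/-- A finite multigraph (nonempty finite vertex set, finite edge set; loops and
parallel edges allowed), edges recorded by their unordered pair of endpoints. -/
structure Multigraph where
  V : Type
  E : Type
  [fintypeV : Fintype V]
  [decEqV : DecidableEq V]
  [nonemptyV : Nonempty V]
  [fintypeE : Fintype E]
  ends : E → Sym2 V

attribute [instance] Multigraph.fintypeV Multigraph.decEqV
  Multigraph.nonemptyV Multigraph.fintypeE

/-- The order (number of vertices) of a multigraph. -/
def Multigraph.order (G : Multigraph) : ℕ := Fintype.card G.V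

/-- An assembly of `G` from tiles over `Fin m`: each edge gets an orientation
(an ordered pair of vertices compatible with its endpoints) and a bond-edge type. -/
structure Assembly (m : ℕ) (G : Multigraph) where
  orient : G.E → G.V × G.V
  label : G.E → Fin m
  orient_ends : ∀ e : G.E, G.ends e = s((orient e).1, (orient e).2)

/-- The tile of a vertex `v` under an assembly: one unhatted `a` for each edge
labeled `a` oriented out of `v`, one hatted `a` for each edge labeled `a`
oriented into `v`. -/
def Assembly.tileOf {m : ℕ} {G : Multigraph} (A : Assembly m G) (v : G.V) : Tile m :=
  (Finset.univ : Finset G.E).val.bind fun e =>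
    (if (A.orient e).1 = v then {Sum.inl (A.label e)} else 0) +
    (if (A.orient e).2 = v then {Sum.inr (A.label e)} else 0)

/-- `G` is realized by the pot `P`: there is an assembly of `G` all of whose
vertex tiles belong to `P`. -/
def Realizes {m : ℕ} (P : Pot m) (G : Multigraph) : Prop :=
  ∃ A : Assembly m G, ∀ v : G.V, A.tileOf v ∈ P

/-- `C(P)`: the class of multigraphs realized by `P`. -/
def CSet {m : ℕ} (P : Pot m) : Set Multigraph := {G | Realizes P G}

/-- `m_P`: the minimum order of a multigraph realized by `P`. -/
noncomputable def mP {m : ℕ} (P : Pot m) : ℕ :=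
  sInf {n | ∃ G ∈ CSet P, G.order = n}

/-- `C_min(P)`: the multigraphs realized by `P` of minimum order. -/
def Cmin {m : ℕ} (P : Pot m) : Set Multigraph :=
  {G ∈ CSet P | G.order = mP P}

/-- An isomorphism of multigraphs. -/
structure MultigraphIso (G H : Multigraph) where
  vEquiv : G.V ≃ H.V
  eEquiv : G.E ≃ H.E
  ends_eq : ∀ e : G.E, H.ends (eEquiv e) = (G.ends e).map vEquiv

/-- Two multigraphs are isomorphic. -/
def Isomorphic (G H : Multigraph) : Prop := Nonempty (MultigraphIso G H)

/-- Scenario 1: minimum number of tile types over all pots realizing `G`. -/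
noncomputable def T1 (G : Multigraph) : ℕ :=
  sInf {c | ∃ m : ℕ, ∃ P : Pot m, Realizes P G ∧ P.card = c}

/-- Scenario 1: minimum number of bond-edge types over all pots realizing `G`. -/
noncomputable def B1 (G : Multigraph) : ℕ :=
  sInf {m | ∃ P : Pot m, Realizes P G}

/-- Scenario 2: minimum number of tile types over pots `P` with `G ∈ C(P)` and
`m_P = |V(G)|`. -/
noncomputable def T2 (G : Multigraph) : ℕ :=
  sInf {c | ∃ m : ℕ, ∃ P : Pot m, Realizes P G ∧ mP P = G.order ∧ P.card = c}

/-- Scenario 2: minimum number of bond-edge types over pots `P` with `G ∈ C(P)`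
and `m_P = |V(G)|`. -/
noncomputable def B2 (G : Multigraph) : ℕ :=
  sInf {m | ∃ P : Pot m, Realizes P G ∧ mP P = G.order}

/-- Scenario 3: minimum number of tile types over pots `P` with `C_min(P)`
consisting exactly of the multigraphs isomorphic to `G`. -/
noncomputable def T3 (G : Multigraph) : ℕ :=
  sInf {c | ∃ m : ℕ, ∃ P : Pot m, Cmin P = {H | Isomorphic H G} ∧ P.card = c}

/-- Scenario 3: minimum number of bond-edge types over pots `P` with `C_min(P)`
consisting exactly of the multigraphs isomorphic to `G`. -/
noncomputable def B3 (G : Multigraph) : ℕ :=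
  sInf {m | ∃ P : Pot m, Cmin P = {H | Isomorphic H G}}

/-- The degree of a vertex (a loop contributes 2). -/
def Multigraph.degree (G : Multigraph) (v : G.V) : ℕ :=
  ∑ e : G.E, (if v ∈ G.ends e then (if (G.ends e).IsDiag then 2 else 1) else 0)

/-- `av(G)`: the number of distinct vertex degrees in `G`. -/
def av (G : Multigraph) : ℕ := (Finset.univ.image G.degree).card

/-- `ev(G)`: the number of distinct even vertex degrees in `G`. -/
def ev (G : Multigraph) : ℕ :=
  ((Finset.univ.image G.degree).filter (fun d => Even d)).card

/-- `ov(G)`: the number of distinct odd vertex degrees in `G`. -/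
def ov (G : Multigraph) : ℕ :=
  ((Finset.univ.image G.degree).filter (fun d => Odd d)).card

/-- `z i t`: the net number of cohesive ends of type `i` on tile `t`
(unhatted count minus hatted count). -/
def zval {m : ℕ} (i : Fin m) (t : Tile m) : ℤ :=
  (t.count (Sum.inl i) : ℤ) - (t.count (Sum.inr i) : ℤ)

/-- The wheel graph on `n` vertices: the hub is `none`; the outer-cycle
vertices are `some i` for `i : Fin (n-1)`.  Edge `Sum.inl i` is the spoke from
the hub to `some i`; edge `Sum.inr i` is the outer-cycle edge from `some i` to
`some ((i+1) mod (n-1))`. -/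
def wheel (n : ℕ) : Multigraph where
  V := Option (Fin (n - 1))
  E := Fin (n - 1) ⊕ Fin (n - 1)
  ends e :=
    match e with
    | Sum.inl i => s((none : Option (Fin (n - 1))), some i)
    | Sum.inr i => s(some i,
        some ⟨(i.val + 1) % (n - 1), Nat.mod_lt _ (by have := i.isLt; omega)⟩)

/-- The cycle graph on `n` vertices (vertices `none, some 0, …, some (n-2)`,
edge `k` joining the `k`-th and `(k+1 mod n)`-th vertices in this order). -/
def cycleVtx (n : ℕ) (k : Fin n) : Option (Fin (n - 1)) :=
  if h : k.val = 0 then none else some ⟨k.val - 1, by have := k.isLt; omega⟩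

def cycleGraph (n : ℕ) : Multigraph where
  V := Option (Fin (n - 1))
  E := Fin n
  ends k := s(cycleVtx n k,
    cycleVtx n ⟨(k.val + 1) % n, Nat.mod_lt _ (by have := k.isLt; omega)⟩)

section Balanced
variable {V : Type} [DecidableEq V]

lemma sum_split_one {E : Type} [Fintype E] [DecidableEq E] (e0 : E) (h : E → ℕ) :
    ∑ e, h e = h e0 + ∑ e' : {e : E // e ≠ e0}, h e'.val := by
  rw [← Finset.sum_erase_add Finset.univ h (Finset.mem_univ e0),
    Finset.sum_subtype (p := fun e => e ≠ e0) (Finset.univ.erase e0) (fun x => by simp) h]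
  ring

lemma sum_split_two {E : Type} [Fintype E] [DecidableEq E] {e1 e2 : E} (hne : e1 ≠ e2)
    (h : E → ℕ) :
    ∑ e, h e = h e1 + h e2 + ∑ e' : {e : E // e ≠ e1 ∧ e ≠ e2}, h e'.val := by
  rw [← Finset.sum_erase_add Finset.univ h (Finset.mem_univ e1),
    ← Finset.sum_erase_add (Finset.univ.erase e1) h
      (Finset.mem_erase.mpr ⟨hne.symm, Finset.mem_univ _⟩),
    Finset.sum_subtype (p := fun e => e ≠ e1 ∧ e ≠ e2) ((Finset.univ.erase e1).erase e2)
      (fun x => by simp [Finset.mem_erase]; tauto) h]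
  ring

theorem exists_balanced (n : ℕ) (E : Type) [Fintype E] [DecidableEq E]
    (ends : E → Sym2 V) (hcard : Fintype.card E ≤ n) :
    ∃ f : E → V × V,
      (∀ e, s((f e).1, (f e).2) = ends e) ∧
      ∀ v : V,
        (∑ e, if (f e).1 = v then 1 else 0) ≤ (∑ e, if (f e).2 = v then 1 else 0) + 1 ∧
        (∑ e, if (f e).2 = v then 1 else 0) ≤ (∑ e, if (f e).1 = v then 1 else 0) + 1 := by
  classical
  induction n generalizing E with
  | zero =>
    have : IsEmpty E := Fintype.card_eq_zero_iff.mp (Nat.le_zero.mp hcard)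
    exact ⟨fun e => isEmptyElim e, fun e => isEmptyElim e, fun v => by simp⟩
  | succ n ih =>
    by_cases hloop : ∃ e0 : E, (ends e0).IsDiag
    · -- remove a loop
      obtain ⟨e0, hd⟩ := hloop
      obtain ⟨⟨x, y⟩, hxy⟩ := Quot.exists_rep (ends e0)
      have hxy : ends e0 = s(x, y) := hxy.symm
      have hxyeq : x = y := Sym2.mk_isDiag_iff.mp (hxy ▸ hd)
      subst hxyeq
      have hc : Fintype.card {e : E // e ≠ e0} ≤ n := by
        rw [Fintype.card_subtype]
        have h1 : (Finset.univ.filter (fun e : E => e ≠ e0)) = Finset.univ.erase e0 := by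
          ext e; simp [Finset.mem_erase, and_comm]
        rw [h1, Finset.card_erase_of_mem (Finset.mem_univ _), Finset.card_univ]
        have := Fintype.card_pos_iff.mpr ⟨e0⟩
        omega
      obtain ⟨f', hf'1, hf'2⟩ := ih {e : E // e ≠ e0} (fun e' => ends e'.val) hc
      refine ⟨fun e => if h : e = e0 then (x, x) else f' ⟨e, h⟩, ?_, ?_⟩
      · intro e
        by_cases h : e = e0
        · subst h; simp [hxy]
        · simp [h, hf'1]
      · intro v
        have h1 : (∑ e, if ((if h : e = e0 then (x, x) else f' ⟨e, h⟩) : V × V).1 = v then 1 else 0)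
            = (if x = v then 1 else 0) + ∑ e' : {e : E // e ≠ e0}, if (f' e').1 = v then 1 else 0 := by
          rw [sum_split_one e0]
          simp only [dif_pos rfl]
          congr 1
          apply Finset.sum_congr rfl
          intro e' _
          rw [dif_neg e'.prop]
        have h2 : (∑ e, if ((if h : e = e0 then (x, x) else f' ⟨e, h⟩) : V × V).2 = v then 1 else 0)
            = (if x = v then 1 else 0) + ∑ e' : {e : E // e ≠ e0}, if (f' e').2 = v then 1 else 0 := by
          rw [sum_split_one e0]
          simp only [dif_pos rfl]
          congr 1
          apply Finset.sum_congr rfl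
          intro e' _
          rw [dif_neg e'.prop]
        rw [h1, h2]
        obtain ⟨u1, u2⟩ := hf'2 v
        by_cases hxv : x = v
        · simp only [if_pos hxv]; omega
        · simp only [if_neg hxv]; omega
    · by_cases hshare : ∃ (e1 e2 : E) (v : V), e1 ≠ e2 ∧ v ∈ ends e1 ∧ v ∈ ends e2
      · obtain ⟨e1, e2, v0, hne, h1, h2⟩ := hshare
        obtain ⟨a, ha⟩ := Sym2.mem_iff_exists.mp h1
        obtain ⟨b, hb⟩ := Sym2.mem_iff_exists.mp h2
        have hcard2 : 2 ≤ Fintype.card E := Fintype.one_lt_card_iff.mpr ⟨e1, e2, hne⟩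
        have hcsub : Fintype.card {e : E // e ≠ e1 ∧ e ≠ e2} = Fintype.card E - 2 := by
          rw [Fintype.card_subtype]
          have h1' : (Finset.univ.filter (fun e : E => e ≠ e1 ∧ e ≠ e2))
              = (Finset.univ.erase e1).erase e2 := by
            ext e; simp [Finset.mem_erase]; tauto
          rw [h1', Finset.card_erase_of_mem (Finset.mem_erase.mpr ⟨hne.symm, Finset.mem_univ _⟩),
            Finset.card_erase_of_mem (Finset.mem_univ _), Finset.card_univ]
          omega
        have hc : Fintype.card ({e : E // e ≠ e1 ∧ e ≠ e2} ⊕ Unit) ≤ n := by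
          rw [Fintype.card_sum, hcsub]
          simp only [Fintype.card_unit]
          omega
        obtain ⟨f', hf'1, hf'2⟩ := ih ({e : E // e ≠ e1 ∧ e ≠ e2} ⊕ Unit)
          (fun e' => match e' with
            | Sum.inl e => ends e.val
            | Sum.inr _ => s(a, b)) hc
        have hpor : f' (Sum.inr ()) = (a, b) ∨ f' (Sum.inr ()) = (b, a) := by
          have := hf'1 (Sum.inr ())
          simp only at this
          rcases Sym2.eq_iff.mp this with ⟨hh1, hh2⟩ | ⟨hh1, hh2⟩
          · left; exact Prod.ext hh1 hh2
          · right; exact Prod.ext hh1 hh2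
        obtain ⟨q1, q2, hq1, hq2, hq1f, hq2f⟩ :
            ∃ q1 q2 : V × V, s(q1.1, q1.2) = ends e1 ∧ s(q2.1, q2.2) = ends e2 ∧
              (∀ v : V, ((if q1.1 = v then 1 else 0) + if q2.1 = v then 1 else 0)
                  = ((if (f' (Sum.inr ())).1 = v then 1 else 0) + if v0 = v then (1:ℕ) else 0)) ∧
              (∀ v : V, ((if q1.2 = v then 1 else 0) + if q2.2 = v then 1 else 0)
                  = ((if (f' (Sum.inr ())).2 = v then 1 else 0) + if v0 = v then (1:ℕ) else 0)) := by
          rcases hpor with hpe | hpe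
          · refine ⟨(a, v0), (v0, b), ?_, ?_, ?_, ?_⟩
            · rw [ha]; exact Sym2.eq_swap
            · rw [hb]
            · intro v; rw [hpe]
            · intro v; rw [hpe]; simp only; ring
          · refine ⟨(v0, a), (b, v0), ?_, ?_, ?_, ?_⟩
            · rw [ha]
            · rw [hb]; exact Sym2.eq_swap
            · intro v; rw [hpe]; simp only; ring
            · intro v; rw [hpe]
        refine ⟨fun e => if h : e = e1 then q1 else if h' : e = e2 then q2
          else f' (Sum.inl ⟨e, h, h'⟩), ?_, ?_⟩
        · intro e
          dsimp only
          by_cases he1 : e = e1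
          · subst he1; rw [dif_pos rfl]; exact hq1
          · by_cases he2 : e = e2
            · subst he2; rw [dif_neg he1, dif_pos rfl]; exact hq2
            · rw [dif_neg he1, dif_neg he2]
              exact hf'1 (Sum.inl ⟨e, he1, he2⟩)
        · intro v
          have hsplitE : ∀ g : V × V → ℕ,
              (∑ e, g (if h : e = e1 then q1 else if h' : e = e2 then q2
                else f' (Sum.inl ⟨e, h, h'⟩)))
              = g q1 + g q2
                + ∑ e'' : {e : E // e ≠ e1 ∧ e ≠ e2}, g (f' (Sum.inl e'')) := by
            intro g
            rw [sum_split_two hne]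
            try dsimp only
            rw [dif_pos rfl, dif_neg hne.symm, dif_pos rfl]
            congr 1
            apply Finset.sum_congr rfl
            intro e'' _
            rw [dif_neg e''.prop.1, dif_neg e''.prop.2]
          have hsplitE' : ∀ g : V × V → ℕ,
              (∑ e' : ({e : E // e ≠ e1 ∧ e ≠ e2} ⊕ Unit), g (f' e'))
              = g (f' (Sum.inr ()))
                + ∑ e'' : {e : E // e ≠ e1 ∧ e ≠ e2}, g (f' (Sum.inl e'')) := by
            intro g
            rw [Fintype.sum_sum_type]
            rw [Fintype.sum_unique (fun u : Unit => g (f' (Sum.inr u)))]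
            ring
          have k1 := hsplitE (fun q => if q.1 = v then 1 else 0)
          have k2 := hsplitE (fun q => if q.2 = v then 1 else 0)
          have k3 := hsplitE' (fun q => if q.1 = v then 1 else 0)
          have k4 := hsplitE' (fun q => if q.2 = v then 1 else 0)
          rw [k1, k2]
          obtain ⟨u1, u2⟩ := hf'2 v
          rw [k3, k4] at u1 u2
          have m1 := hq1f v
          have m2 := hq2f v
          omega
      · -- every vertex has at most one incidence: orient arbitrarily
        push_neg at hloop
        push_neg at hshare
        have hex : ∀ e : E, ∃ q : V × V, s(q.1, q.2) = ends e := by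
          intro e
          refine ⟨(ends e).out, ?_⟩
          show Quot.mk _ (_, _) = _
          rw [Prod.mk.eta]
          exact Quot.out_eq _
        choose f hmk using hex
        refine ⟨f, hmk, ?_⟩
        intro v
        have hfst : ∀ e, (f e).1 ∈ ends e := fun e => by
          rw [← hmk e]; exact Sym2.mem_mk_left _ _
        have hsnd : ∀ e, (f e).2 ∈ ends e := fun e => by
          rw [← hmk e]; exact Sym2.mem_mk_right _ _
        have hboth : ∀ e, ¬((f e).1 = v ∧ (f e).2 = v) := by
          rintro e ⟨hh1, hh2⟩
          exact hloop e (by rw [← hmk e, hh1, hh2]; exact Sym2.mk_isDiag_iff.mpr rfl)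
        have hone : (∑ e, ((if (f e).1 = v then 1 else 0) + if (f e).2 = v then 1 else 0)) ≤ 1 := by
          set term : E → ℕ := fun e => (if (f e).1 = v then 1 else 0) + if (f e).2 = v then 1 else 0 with hterm_def
          have hterm : ∀ e, term e ≤ 1 := by
            intro e
            by_cases hh1 : (f e).1 = v
            · have hh2 : ¬(f e).2 = v := fun h => hboth e ⟨hh1, h⟩
              simp only [hterm_def]
              rw [if_pos hh1, if_neg hh2]
            · simp only [hterm_def]
              rw [if_neg hh1]
              by_cases hh2 : (f e).2 = v
              · rw [if_pos hh2]
              · rw [if_neg hh2]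
                omega
          have htouch : ∀ e e' : E, term e ≠ 0 → term e' ≠ 0 → e = e' := by
            intro e e' he he'
            by_contra hnee
            have hv : ∀ e'' : E, term e'' ≠ 0 → v ∈ ends e'' := by
              intro e'' he''
              by_cases hh1 : (f e'').1 = v
              · rw [← hh1]; exact hfst e''
              · by_cases hh2 : (f e'').2 = v
                · rw [← hh2]; exact hsnd e''
                · exfalso
                  apply he''
                  simp only [hterm_def]
                  rw [if_neg hh1, if_neg hh2]
            exact (hshare e e' v hnee (hv e he)) (hv e' he')
          calc (∑ e, term e) = ∑ e ∈ Finset.univ.filter (fun e => term e ≠ 0), term e := by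
                rw [Finset.sum_filter_ne_zero]
            _ ≤ (Finset.univ.filter (fun e => term e ≠ 0)).card * 1 := by
                rw [← smul_eq_mul]
                exact Finset.sum_le_card_nsmul _ _ 1 (fun e _ => hterm e)
            _ ≤ 1 := by
                have hc1 : (Finset.univ.filter (fun e => term e ≠ 0)).card ≤ 1 := by
                  apply Finset.card_le_one.mpr
                  intro e he e' he'
                  simp only [Finset.mem_filter] at he he'
                  exact htouch e e' he.2 he'.2
                omega
        have hsum := Finset.sum_add_distrib (s := (Finset.univ : Finset E))
          (f := fun e => if (f e).1 = v then 1 else 0)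
          (g := fun e => if (f e).2 = v then 1 else 0)
        omega

end Balanced

lemma tileOf_card {m : ℕ} {G : Multigraph} (A : Assembly m G) (v : G.V) :
    Multiset.card (A.tileOf v) = G.degree v := by
  classical
  rw [Assembly.tileOf, Multiset.card_bind, Multigraph.degree]
  simp only [Function.comp_def]
  rw [Finset.sum_map_val]
  apply Finset.sum_congr rfl
  intro e _
  rw [A.orient_ends e]
  rw [Multiset.card_add]
  by_cases h1 : (A.orient e).1 = v <;> by_cases h2 : (A.orient e).2 = v
  · have hd : (A.orient e).1 = (A.orient e).2 := h1.trans h2.symm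
    simp [h1, h2, hd, Sym2.mem_iff, Sym2.mk_isDiag_iff]
  · have hd : ¬(A.orient e).1 = (A.orient e).2 := by
      rw [h1]; exact fun h => h2 h.symm
    have h2' : ¬v = (A.orient e).2 := fun h => h2 h.symm
    simp [h1, h2, h2', hd, Sym2.mem_iff, Sym2.mk_isDiag_iff]
  · have hd : ¬(A.orient e).1 = (A.orient e).2 := by
      rw [h2]; exact h1
    have h1' : ¬v = (A.orient e).1 := fun h => h1 h.symm
    simp [h1, h1', h2, hd, Sym2.mem_iff, Sym2.mk_isDiag_iff]
  · have h1' : ¬v = (A.orient e).1 := fun h => h1 h.symm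
    have h2' : ¬v = (A.orient e).2 := fun h => h2 h.symm
    rw [if_neg h1, if_neg h2, if_neg]
    · simp
    · intro hv
      rw [← Prod.mk.eta (p := A.orient e)] at hv
      rcases Sym2.mem_iff.mp hv with h | h
      · exact h1' h
      · exact h2' h

/-- `av(G) ≤ T₁(G) ≤ ev(G) + 2·ov(G)` for every finite graph `G`. -/
theorem T1_bounds (G : Multigraph) :
    av G ≤ T1 G ∧ T1 G ≤ ev G + 2 * ov G := by
  classical
  -- construct a balanced orientation and the corresponding pot
  obtain ⟨f, hf1, hf2⟩ := exists_balanced (V := G.V) (Fintype.card G.E) G.E G.ends le_rfl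
  set A : Assembly 1 G := ⟨f, fun _ => 0, fun e => (hf1 e).symm⟩ with hA
  set out : G.V → ℕ := fun v => ∑ e, if (f e).1 = v then 1 else 0 with hout
  set inn : G.V → ℕ := fun v => ∑ e, if (f e).2 = v then 1 else 0 with hinn
  set g : ℕ × ℕ → Tile 1 := fun q =>
    Multiset.replicate q.1 (Sum.inl 0) + Multiset.replicate q.2 (Sum.inr 0) with hg
  have hcount1 : ∀ v, Multiset.count (Sum.inl (0 : Fin 1)) (A.tileOf v) = out v := by
    intro v
    rw [Assembly.tileOf, Multiset.count_bind, Finset.sum_map_val, hout]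
    apply Finset.sum_congr rfl
    intro e _
    have horient : A.orient e = f e := rfl
    have hlabel : A.label e = 0 := rfl
    rw [horient, hlabel, Multiset.count_add]
    by_cases h1 : (f e).1 = v <;> by_cases h2 : (f e).2 = v <;> simp [h1, h2]
  have hcount2 : ∀ v, Multiset.count (Sum.inr (0 : Fin 1)) (A.tileOf v) = inn v := by
    intro v
    rw [Assembly.tileOf, Multiset.count_bind, Finset.sum_map_val, hinn]
    apply Finset.sum_congr rfl
    intro e _
    have horient : A.orient e = f e := rfl
    have hlabel : A.label e = 0 := rfl
    rw [horient, hlabel, Multiset.count_add]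
    by_cases h1 : (f e).1 = v <;> by_cases h2 : (f e).2 = v <;> simp [h1, h2]
  have htile : ∀ v, A.tileOf v = g (out v, inn v) := by
    intro v
    refine Multiset.ext.mpr fun x => ?_
    rcases x with i | i
    · rw [Fin.fin_one_eq_zero i, hcount1 v, hg]
      simp [Multiset.count_replicate]
    · rw [Fin.fin_one_eq_zero i, hcount2 v, hg]
      simp [Multiset.count_replicate]
  have hdeg : ∀ v, G.degree v = out v + inn v := by
    intro v
    rw [← tileOf_card A v, htile v, hg]
    simp
  set P : Pot 1 := Finset.image A.tileOf Finset.univ with hP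
  have hreal : Realizes P G := ⟨A, fun v => Finset.mem_image_of_mem _ (Finset.mem_univ v)⟩
  set Q : Finset (ℕ × ℕ) := Finset.image (fun v => (out v, inn v)) Finset.univ with hQ
  have hPQ : P = Finset.image g Q := by
    rw [hP, hQ, Finset.image_image]
    exact Finset.image_congr (fun v _ => htile v)
  have hcardPQ : P.card ≤ Q.card := by
    rw [hPQ]; exact Finset.card_image_le
  have hQprop : ∀ q ∈ Q, (∃ v, G.degree v = q.1 + q.2) ∧ q.1 ≤ q.2 + 1 ∧ q.2 ≤ q.1 + 1 := by
    intro q hq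
    obtain ⟨v, -, rfl⟩ := Finset.mem_image.mp hq
    exact ⟨⟨v, hdeg v⟩, (hf2 v).1, (hf2 v).2⟩
  have hsplit := Finset.card_filter_add_card_filter_not
    (s := Q) (p := fun q => Even (q.1 + q.2))
  have heven : (Q.filter (fun q => Even (q.1 + q.2))).card ≤ ev G := by
    rw [ev]
    apply Finset.card_le_card_of_injOn (fun q => q.1 + q.2)
    · intro q hq
      simp only [Finset.coe_filter, Set.mem_setOf_eq] at hq
      obtain ⟨⟨v, hv⟩, -, -⟩ := hQprop q hq.1
      dsimp only
      exact Finset.mem_filter.mpr ⟨Finset.mem_image.mpr ⟨v, Finset.mem_univ v, hv⟩, hv ▸ hq.2⟩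
    · intro q hq q' hq' heq
      simp only [Finset.coe_filter, Set.mem_setOf_eq] at hq hq'
      obtain ⟨-, h1, h2⟩ := hQprop q hq.1
      obtain ⟨-, h1', h2'⟩ := hQprop q' hq'.1
      obtain ⟨k, hk⟩ := hq.2
      obtain ⟨k', hk'⟩ := hq'.2
      have heq' : q.1 + q.2 = q'.1 + q'.2 := heq
      have hcomp : q.1 = q'.1 ∧ q.2 = q'.2 := by omega
      exact Prod.ext hcomp.1 hcomp.2
  have hodd : (Q.filter (fun q => ¬Even (q.1 + q.2))).card ≤ 2 * ov G := by
    have hstep := Finset.card_le_mul_card_image (f := fun q : ℕ × ℕ => q.1 + q.2)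
      (Q.filter (fun q => ¬Even (q.1 + q.2))) 2 ?_
    · refine le_trans hstep ?_
      have himg : Finset.image (fun q : ℕ × ℕ => q.1 + q.2)
          (Q.filter (fun q => ¬Even (q.1 + q.2)))
          ⊆ (Finset.image G.degree Finset.univ).filter (fun d => Odd d) := by
        intro d hd
        obtain ⟨q, hq, rfl⟩ := Finset.mem_image.mp hd
        rw [Finset.mem_filter] at hq
        obtain ⟨⟨v, hv⟩, -, -⟩ := hQprop q hq.1
        exact Finset.mem_filter.mpr ⟨Finset.mem_image.mpr ⟨v, Finset.mem_univ v, hv⟩,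
          Nat.not_even_iff_odd.mp hq.2⟩
      rw [ov]
      exact Nat.mul_le_mul_left 2 (Finset.card_le_card himg)
    · intro b hb
      have hsub : (Q.filter (fun q => ¬Even (q.1 + q.2))).filter
          (fun q => q.1 + q.2 = b)
          ⊆ {((b + 1) / 2, b / 2), (b / 2, (b + 1) / 2)} := by
        intro q hq
        rw [Finset.mem_filter, Finset.mem_filter] at hq
        obtain ⟨⟨hqQ, hoddq⟩, hsum⟩ := hq
        obtain ⟨-, h1, h2⟩ := hQprop q hqQ
        have hb2 : (q.1 + q.2) % 2 = 1 := Nat.not_even_iff.mp hoddq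
        have hcases : (q.1 = (b + 1) / 2 ∧ q.2 = b / 2) ∨
            (q.1 = b / 2 ∧ q.2 = (b + 1) / 2) := by omega
        rcases hcases with ⟨ha1, ha2⟩ | ⟨ha1, ha2⟩
        · exact Finset.mem_insert.mpr (Or.inl (Prod.ext ha1 ha2))
        · exact Finset.mem_insert.mpr (Or.inr (Finset.mem_singleton.mpr (Prod.ext ha1 ha2)))
      refine le_trans (Finset.card_le_card hsub) ?_
      refine le_trans (Finset.card_insert_le _ _) ?_
      simp
  have hPcard : P.card ≤ ev G + 2 * ov G := by omega
  have hub : T1 G ≤ ev G + 2 * ov G :=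
    le_trans (Nat.sInf_le (⟨1, P, hreal, rfl⟩ :
      P.card ∈ {c | ∃ m : ℕ, ∃ P : Pot m, Realizes P G ∧ P.card = c})) hPcard
  refine ⟨?_, hub⟩
  -- lower bound
  have hne : {c | ∃ m : ℕ, ∃ P : Pot m, Realizes P G ∧ P.card = c}.Nonempty :=
    ⟨P.card, 1, P, hreal, rfl⟩
  have hmem : T1 G ∈ {c | ∃ m : ℕ, ∃ P : Pot m, Realizes P G ∧ P.card = c} :=
    Nat.sInf_mem hne
  obtain ⟨m', P', hreal', hcard'⟩ := hmem
  obtain ⟨A', hA'⟩ := hreal'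
  have hlow : av G ≤ P'.card := by
    rw [av]
    apply Finset.card_le_card_of_injOn
      (fun d => if h : ∃ v, G.degree v = d then A'.tileOf h.choose else ∅)
    · intro d hd
      obtain ⟨v, -, rfl⟩ := Finset.mem_image.mp hd
      have h : ∃ w, G.degree w = G.degree v := ⟨v, rfl⟩
      dsimp only
      rw [dif_pos h]
      exact hA' h.choose
    · intro d hd d' hd' heq
      simp only [Finset.coe_image, Set.mem_image] at hd hd'
      obtain ⟨v, -, rfl⟩ := hd
      obtain ⟨v', -, rfl⟩ := hd'
      have h : ∃ w, G.degree w = G.degree v := ⟨v, rfl⟩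
      have h' : ∃ w, G.degree w = G.degree v' := ⟨v', rfl⟩
      have heq2 : (if hh : ∃ w, G.degree w = G.degree v then A'.tileOf hh.choose else ∅)
          = (if hh : ∃ w, G.degree w = G.degree v' then A'.tileOf hh.choose else ∅) := heq
      rw [dif_pos h, dif_pos h'] at heq2
      have hc := congrArg Multiset.card heq2
      rw [tileOf_card, tileOf_card, h.choose_spec, h'.choose_spec] at hc
      exact hc
  exact hcard' ▸ hlow
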